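/- Suppose $m \ge d+2$ or $n \ge d+2$. If a subset $\mathcal{C}$ of the grid $\{1,\dots,n\}\times\{1,\dots,m\}$ satisfies $|\mathcal{C}| > \max\{f(k) : 1 \le k \le d+1\}$ with $f(x) = x^2+(m-n-d-2)x+(n+1)(d+1)-m$, then (after a suitable permutation of rows and of entries within rows turning a superset structure into a tableau) $\mathcal{C}$ contains at least two distinct effective sets. -/

import Mathlib

/-- A subset `Q` of the `n × m` grid is *effective* if there are `d+1` distinct rows
`q 0, …, q d` such that `Q` meets row `q ν` in exactly `ν+1` points and meets no
other row. -/
def IsEffective (n m d : ℕ) (Q : Finset (Fin n × Fin m)) : Prop :=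
  ∃ q : Fin (d + 1) → Fin n, Function.Injective q ∧
    (∀ ν : Fin (d + 1), (Q.filter (fun p => p.1 = q ν)).card = ν.1 + 1) ∧
    (∀ p ∈ Q, ∃ ν, p.1 = q ν)

/-- The quadratic `f(x) = x² + (m-n-d-2)x + (n+1)(d+1) - m`. -/
def fQ (n m d : ℕ) (x : ℤ) : ℤ :=
  x ^ 2 + ((m : ℤ) - n - d - 2) * x + ((n : ℤ) + 1) * ((d : ℤ) + 1) - m

/-- `max { f(k) : 1 ≤ k ≤ d+1 }`. -/
def maxF (n m d : ℕ) : ℤ :=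
  (Finset.Icc 1 (d + 1)).sup' (Finset.nonempty_Icc.mpr (by omega))
    (fun k : ℕ => fQ n m d (k : ℤ))

/-- Suppose `m ≥ d+2` or `n ≥ d+2`. Any subset `C` of the `n × m` grid
with `|C| > max { f(k) : 1 ≤ k ≤ d+1 }` (which, after permuting rows and entries
within rows, may be arranged as a tableau) contains at least two distinct
effective sets. -/
lemma fQ_le_maxF (n m d : ℕ) {k : ℕ} (h1 : 1 ≤ k) (h2 : k ≤ d + 1) :
    fQ n m d (k : ℤ) ≤ maxF n m d := by
  exact Finset.le_sup' (fun k : ℕ => fQ n m d (k : ℤ)) (Finset.mem_Icc.mpr ⟨h1, h2⟩)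

lemma row_card_le (n m : ℕ) (C : Finset (Fin n × Fin m)) (i : Fin n) :
    (C.filter (fun p => p.1 = i)).card ≤ m := by
  calc (C.filter (fun p => p.1 = i)).card
      ≤ (Finset.univ : Finset (Fin m)).card := by
        apply Finset.card_le_card_of_injOn (fun p => p.2) (fun _ _ => Finset.mem_univ _)
        intro a ha b hb hab
        simp only [Finset.mem_coe, Finset.mem_filter] at ha hb
        exact Prod.ext (ha.2.trans hb.2.symm) hab
    _ = m := by simp

lemma card_eq_sum_rows (n m : ℕ) (C : Finset (Fin n × Fin m)) :
    C.card = ∑ i : Fin n, (C.filter (fun p => p.1 = i)).card :=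
  Finset.card_eq_sum_card_fiberwise (fun p _ => Finset.mem_univ p.1)

lemma counting (n m d : ℕ) (hd : 1 ≤ d) (C : Finset (Fin n × Fin m))
    (hC : maxF n m d < (C.card : ℤ)) (hm : d + 1 ≤ m) (hn : d + 1 ≤ n) :
    ∀ k, 1 ≤ k → k ≤ d + 1 →
      k ≤ (Finset.univ.filter
        (fun i : Fin n => d + 2 - k ≤ (C.filter (fun p => p.1 = i)).card)).card := by
  intro k hk1 hk2
  by_contra hcon
  set S := Finset.univ.filter
    (fun i : Fin n => d + 2 - k ≤ (C.filter (fun p => p.1 = i)).card) with hSdef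
  have hs : S.card ≤ k - 1 := by omega
  have hsn : S.card ≤ n := le_trans (Finset.card_le_card (Finset.filter_subset _ _)) (by simp)
  -- bound the sum
  have hsum1 : ∑ i ∈ S, (C.filter (fun p => p.1 = i)).card ≤ S.card * m :=
    Finset.sum_le_card_nsmul _ _ m (fun i _ => row_card_le n m C i)
  have hsum2 : ∑ i ∈ Finset.univ.filter
      (fun i : Fin n => ¬ (d + 2 - k ≤ (C.filter (fun p => p.1 = i)).card)),
      (C.filter (fun p => p.1 = i)).card ≤ (n - S.card) * (d + 1 - k) := by
    have hcc : (Finset.univ.filter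
        (fun i : Fin n => ¬ (d + 2 - k ≤ (C.filter (fun p => p.1 = i)).card))).card
        = n - S.card := by
      rw [hSdef, Finset.filter_not, Finset.card_sdiff_of_subset (Finset.filter_subset _ _)]
      simp
    calc _ ≤ (Finset.univ.filter
        (fun i : Fin n => ¬ (d + 2 - k ≤ (C.filter (fun p => p.1 = i)).card))).card
          * (d + 1 - k) := by
          apply Finset.sum_le_card_nsmul
          intro i hi
          simp only [Finset.mem_filter, Finset.mem_univ, true_and, not_le] at hi
          omega
      _ = (n - S.card) * (d + 1 - k) := by rw [hcc]
  have htot : C.card ≤ S.card * m + (n - S.card) * (d + 1 - k) := by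
    rw [card_eq_sum_rows n m C,
      ← Finset.sum_filter_add_sum_filter_not Finset.univ
        (fun i : Fin n => d + 2 - k ≤ (C.filter (fun p => p.1 = i)).card)]
    exact Nat.add_le_add hsum1 hsum2
  -- now in ℤ
  have hZ : (C.card : ℤ) ≤ (S.card : ℤ) * m + ((n : ℤ) - S.card) * ((d : ℤ) + 1 - k) := by
    have := htot
    have h1 : ((n - S.card : ℕ) : ℤ) = (n : ℤ) - S.card := by
      push_cast
      omega
    have h2 : ((d + 1 - k : ℕ) : ℤ) = (d : ℤ) + 1 - k := by
      push_cast
      omega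
    calc (C.card : ℤ) ≤ ((S.card * m + (n - S.card) * (d + 1 - k) : ℕ) : ℤ) := by
          exact_mod_cast this
      _ = (S.card : ℤ) * m + ((n : ℤ) - S.card) * ((d : ℤ) + 1 - k) := by
          push_cast [h1, h2]
          ring
  have hfk : (S.card : ℤ) * m + ((n : ℤ) - S.card) * ((d : ℤ) + 1 - k) ≤ fQ n m d k := by
    have hsZ : (S.card : ℤ) ≤ (k : ℤ) - 1 := by exact_mod_cast by omega
    have hmZ : ((d : ℤ) + 1 - k) ≤ (m : ℤ) := by
      have : (k : ℤ) ≥ 1 := by exact_mod_cast hk1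
      have : (m : ℤ) ≥ (d : ℤ) + 1 := by exact_mod_cast hm
      omega
    have key : ((k : ℤ) - 1 - S.card) * ((m : ℤ) - ((d : ℤ) + 1 - k)) ≥ 0 :=
      mul_nonneg (by omega) (by omega)
    have hfq : fQ n m d k = ((k : ℤ) - 1) * m + ((n : ℤ) - (k - 1)) * ((d : ℤ) + 1 - k) := by
      unfold fQ
      ring
    rw [hfq]
    nlinarith [key]
  have := fQ_le_maxF n m (d := d) hk1 hk2
  omega

lemma extract_rows (n d : ℕ) (c : Fin n → ℕ)
    (hS : ∀ k, 1 ≤ k → k ≤ d + 1 →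
      k ≤ (Finset.univ.filter (fun i : Fin n => d + 2 - k ≤ c i)).card) :
    ∃ q : Fin (d + 1) → Fin n, Function.Injective q ∧
      ∀ ν : Fin (d + 1), ν.1 + 1 ≤ c (q ν) := by
  have main : ∀ j, j ≤ d + 1 → ∃ q : Fin j → Fin n, Function.Injective q ∧
      ∀ ν : Fin j, d + 2 - j + ν.1 ≤ c (q ν) := by
    intro j
    induction j with
    | zero => exact fun _ => ⟨Fin.elim0, fun a => a.elim0, fun a => a.elim0⟩
    | succ j ih =>
      intro hj
      obtain ⟨q, hqi, hqc⟩ := ih (by omega)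
      have hcard := hS (j + 1) (by omega) hj
      have himg : (Finset.univ.image q).card = j := by
        rw [Finset.card_image_of_injective _ hqi, Finset.card_univ, Fintype.card_fin]
      have hsub : Finset.univ.image q ⊆
          Finset.univ.filter (fun i : Fin n => d + 2 - (j + 1) ≤ c i) := by
        intro i hi
        simp only [Finset.mem_image] at hi
        obtain ⟨ν, -, rfl⟩ := hi
        simp only [Finset.mem_filter, Finset.mem_univ, true_and]
        have := hqc ν
        omega
      have hns : ¬ (Finset.univ.filter (fun i : Fin n => d + 2 - (j + 1) ≤ c i)) ⊆
          Finset.univ.image q := fun hh => absurd (Finset.card_le_card hh) (by omega)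
      obtain ⟨r, hrS, hrn⟩ := Finset.not_subset.mp hns
      refine ⟨Fin.cons r q, Fin.cons_injective_of_injective ?_ hqi, ?_⟩
      · rintro ⟨ν, rfl⟩
        exact hrn (Finset.mem_image_of_mem q (Finset.mem_univ ν))
      · intro ν
        refine Fin.cases ?_ ?_ ν
        · simp only [Fin.cons_zero, Fin.val_zero]
          simp only [Finset.mem_filter, Finset.mem_univ, true_and] at hrS
          omega
        · intro i
          simp only [Fin.cons_succ, Fin.val_succ]
          have := hqc i
          omega
  obtain ⟨q, h1, h2⟩ := main (d + 1) le_rfl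
  exact ⟨q, h1, fun ν => by have := h2 ν; omega⟩

theorem stmt_15 (n m d : ℕ) (hd : 1 ≤ d) (h : d + 2 ≤ m ∨ d + 2 ≤ n)
    (C : Finset (Fin n × Fin m)) (hC : maxF n m d < (C.card : ℤ)) :
    ∃ Q₁ Q₂ : Finset (Fin n × Fin m), Q₁ ⊆ C ∧ Q₂ ⊆ C ∧ Q₁ ≠ Q₂ ∧
      IsEffective n m d Q₁ ∧ IsEffective n m d Q₂ := by
  classical
  -- basic cardinality consequences
  have hnd : n * d < C.card := by
    have h1 : fQ n m d ((1 : ℕ) : ℤ) = (n : ℤ) * d := by unfold fQ; push_cast; ring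
    have := fQ_le_maxF n m d (k := 1) le_rfl (by omega)
    rw [h1] at this
    exact_mod_cast lt_of_le_of_lt this hC
  have hmd : m * d < C.card := by
    have h1 : fQ n m d ((d + 1 : ℕ) : ℤ) = (m : ℤ) * d := by unfold fQ; push_cast; ring
    have := fQ_le_maxF n m d (k := d + 1) (by omega) le_rfl
    rw [h1] at this
    exact_mod_cast lt_of_le_of_lt this hC
  have hcu : C.card ≤ n * m := by
    have := Finset.card_le_univ C
    simpa using this
  have hm : d + 1 ≤ m := by
    by_contra hcon
    have h2 : n * m ≤ n * d := Nat.mul_le_mul_left n (by omega)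
    exact Nat.lt_irrefl _ (lt_of_lt_of_le hnd (le_trans hcu h2))
  have hn : d + 1 ≤ n := by
    by_contra hcon
    have h2 : n * m ≤ d * m := Nat.mul_le_mul_right m (by omega)
    have h3 : d * m = m * d := Nat.mul_comm d m
    exact Nat.lt_irrefl _ (lt_of_lt_of_le hmd (le_trans hcu (h3 ▸ h2)))
  -- row counts and the staircase of rows
  set c : Fin n → ℕ := fun i => (C.filter (fun p => p.1 = i)).card with hc
  have hcount : ∀ k, 1 ≤ k → k ≤ d + 1 →
      k ≤ (Finset.univ.filter (fun i : Fin n => d + 2 - k ≤ c i)).card :=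
    counting n m d hd C hC hm hn
  have hextract : ∃ q : Fin (d + 1) → Fin n, Function.Injective q ∧
      ∀ ν : Fin (d + 1), ν.1 + 1 ≤ c (q ν) :=
    extract_rows n d c hcount
  obtain ⟨q, hqi, hqc⟩ := hextract
  -- choose the subsets
  have hch : ∀ ν : Fin (d + 1), ∃ T ⊆ C.filter (fun p => p.1 = q ν), T.card = ν.1 + 1 :=
    fun ν => Finset.exists_subset_card_eq (hqc ν)
  choose Qv hQsub hQcard using hch
  have hrow : ∀ ν : Fin (d + 1), ∀ p ∈ Qv ν, p.1 = q ν := by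
    intro ν p hp
    have := hQsub ν hp
    exact (Finset.mem_filter.mp this).2
  have hQvC : ∀ ν : Fin (d + 1), Qv ν ⊆ C :=
    fun ν => (hQsub ν).trans (Finset.filter_subset _ _)
  set Q : Finset (Fin n × Fin m) := Finset.univ.biUnion Qv with hQdef
  have hQC : Q ⊆ C := by
    intro a ha
    obtain ⟨ν, -, hν⟩ := Finset.mem_biUnion.mp ha
    exact hQvC ν hν
  have hQmem : ∀ a, a ∈ Q ↔ ∃ ν, a ∈ Qv ν := by
    intro a
    simp [hQdef, Finset.mem_biUnion]
  have hfil : ∀ ν : Fin (d + 1), Q.filter (fun p => p.1 = q ν) = Qv ν := by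
    intro ν
    ext a
    simp only [Finset.mem_filter, hQmem]
    constructor
    · rintro ⟨⟨μ, hμ⟩, hrowa⟩
      have : q μ = q ν := (hrow μ a hμ) ▸ hrowa
      rwa [hqi this] at hμ
    · intro ha
      exact ⟨⟨ν, ha⟩, hrow ν a ha⟩
  have hQeff : IsEffective n m d Q := by
    refine ⟨q, hqi, fun ν => by rw [hfil ν]; exact hQcard ν, ?_⟩
    intro a ha
    obtain ⟨ν, hν⟩ := (hQmem a).mp ha
    exact ⟨ν, hrow ν a hν⟩
  -- Q is strictly smaller than C
  have hQcard2 : Q.card * 2 = (d + 1) * (d + 2) := by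
    have hdisj : ∀ ν ∈ (Finset.univ : Finset (Fin (d + 1))),
        ∀ μ ∈ (Finset.univ : Finset (Fin (d + 1))), ν ≠ μ → Disjoint (Qv ν) (Qv μ) := by
      intro ν _ μ _ hne
      rw [Finset.disjoint_left]
      intro a haν haμ
      exact hne (hqi ((hrow ν a haν).symm.trans (hrow μ a haμ)))
    have h1 : Q.card = ∑ ν : Fin (d + 1), (Qv ν).card := Finset.card_biUnion hdisj
    have h2 : ∑ ν : Fin (d + 1), (Qv ν).card = ∑ ν : Fin (d + 1), (ν.1 + 1) := by
      exact Finset.sum_congr rfl (fun ν _ => hQcard ν)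
    have h3 : ∑ ν : Fin (d + 1), (ν.1 + 1) = ∑ i ∈ Finset.range (d + 1), (i + 1) := by
      exact Fin.sum_univ_eq_sum_range (fun i => i + 1) (d + 1)
    have h4 : ∑ i ∈ Finset.range (d + 2), i = ∑ i ∈ Finset.range (d + 1), (i + 1) := by
      rw [Finset.sum_range_succ']
      simp
    have h5 := Finset.sum_range_id_mul_two (d + 2)
    have h6 : d + 2 - 1 = d + 1 := rfl
    rw [h1, h2, h3, ← h4, h5, h6]
    ring
  have hQlt : Q.card < C.card := by
    have h2 : Q.card * 2 < C.card * 2 := by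
      rw [hQcard2]
      rcases h with hb | hb
      · calc (d + 1) * (d + 2) ≤ (d * 2) * (d + 2) := Nat.mul_le_mul_right _ (by omega)
          _ = (d * (d + 2)) * 2 := by ring
          _ ≤ (d * m) * 2 := Nat.mul_le_mul_right _ (Nat.mul_le_mul_left d hb)
          _ = (m * d) * 2 := by ring
          _ < C.card * 2 := by omega
      · calc (d + 1) * (d + 2) ≤ (d * 2) * (d + 2) := Nat.mul_le_mul_right _ (by omega)
          _ = (d * (d + 2)) * 2 := by ring
          _ ≤ (d * n) * 2 := Nat.mul_le_mul_right _ (Nat.mul_le_mul_left d hb)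
          _ = (n * d) * 2 := by ring
          _ < C.card * 2 := by omega
    omega
  obtain ⟨p, hpC, hpQ⟩ := Finset.not_subset.mp
    (fun hsub => Nat.lt_irrefl _ (lt_of_lt_of_le hQlt (Finset.card_le_card hsub)))
  by_cases hcase : ∃ ν : Fin (d + 1), p.1 = q ν
  · -- swap a point within a row
    obtain ⟨ν, hpν⟩ := hcase
    have hne : (Qv ν).Nonempty := Finset.card_pos.mp (by rw [hQcard ν]; omega)
    obtain ⟨x, hx⟩ := hne
    have hxQ : x ∈ Q := (hQmem x).mpr ⟨ν, hx⟩
    have hxrow : x.1 = q ν := hrow ν x hx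
    set Q₂ : Finset (Fin n × Fin m) := insert p (Q.erase x) with hQ₂def
    have hpne : p ∉ Q.erase x := fun hh => hpQ (Finset.mem_of_mem_erase hh)
    refine ⟨Q, Q₂, hQC, ?_, ?_, hQeff, ?_⟩
    · intro a ha
      rcases Finset.mem_insert.mp ha with rfl | ha
      · exact hpC
      · exact hQC (Finset.mem_of_mem_erase ha)
    · intro heq
      exact hpQ (heq ▸ Finset.mem_insert_self p (Q.erase x))
    · refine ⟨q, hqi, ?_, ?_⟩
      · intro μ
        by_cases hμν : μ = ν
        · subst hμν
          rw [hQ₂def, Finset.filter_insert, if_pos hpν, Finset.filter_erase, hfil μ]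
          rw [Finset.card_insert_of_notMem, Finset.card_erase_of_mem hx, hQcard μ]
          · omega
          · intro hh
            exact hpQ ((hQmem p).mpr ⟨μ, Finset.mem_of_mem_erase hh⟩)
        · have hpne' : ¬ (p.1 = q μ) := by
            rw [hpν]
            exact fun hh => hμν (hqi hh).symm
          rw [hQ₂def, Finset.filter_insert, if_neg hpne', Finset.filter_erase,
            Finset.erase_eq_of_notMem, hfil μ]
          · exact hQcard μ
          · rw [hfil μ]
            intro hh
            exact hμν (hqi ((hrow μ x hh).symm.trans hxrow))
      · intro a ha
        rcases Finset.mem_insert.mp ha with rfl | ha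
        · exact ⟨ν, hpν⟩
        · obtain ⟨μ, hμ⟩ := (hQmem a).mp (Finset.mem_of_mem_erase ha)
          exact ⟨μ, hrow μ a hμ⟩
  · -- replace row q 0 by the new row p.1
    push_neg at hcase
    have hdz : 0 < d + 1 := by omega
    set z : Fin (d + 1) := ⟨0, hdz⟩ with hzdef
    set q' : Fin (d + 1) → Fin n := fun μ => if μ = z then p.1 else q μ with hq'def
    have hq'z : q' z = p.1 := if_pos rfl
    have hq'ne : ∀ μ : Fin (d + 1), μ ≠ z → q' μ = q μ := fun μ hμ => if_neg hμ
    set Q₂ : Finset (Fin n × Fin m) := insert p (Q.filter (fun a => a.1 ≠ q z)) with hQ₂def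
    have hmemQ₂ : ∀ a, a ∈ Q₂ ↔ a = p ∨ (a ∈ Q ∧ a.1 ≠ q z) := by
      intro a
      rw [hQ₂def]
      simp [Finset.mem_insert, Finset.mem_filter]
    have hq'i : Function.Injective q' := by
      intro a b hab
      have hab' : (if a = z then p.1 else q a) = (if b = z then p.1 else q b) := hab
      by_cases ha : a = z <;> by_cases hb : b = z
      · rw [ha, hb]
      · rw [if_pos ha, if_neg hb] at hab'
        exact absurd hab' (hcase b)
      · rw [if_neg ha, if_pos hb] at hab'
        exact absurd hab'.symm (hcase a)
      · rw [if_neg ha, if_neg hb] at hab'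
        exact hqi hab'
    refine ⟨Q, Q₂, hQC, ?_, ?_, hQeff, ?_⟩
    · intro a ha
      rcases (hmemQ₂ a).mp ha with rfl | ⟨ha1, -⟩
      · exact hpC
      · exact hQC ha1
    · intro heq
      exact hpQ (heq ▸ Finset.mem_insert_self p _)
    · refine ⟨q', hq'i, ?_, ?_⟩
      · intro μ
        by_cases hμz : μ = z
        · have hq'μ : q' μ = p.1 := by rw [hμz]; exact hq'z
          have hμ0 : μ.1 = 0 := by rw [hμz]
          have hset : Q₂.filter (fun a => a.1 = q' μ) = {p} := by
            ext a
            rw [Finset.mem_filter, hmemQ₂, Finset.mem_singleton, hq'μ]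
            constructor
            · rintro ⟨rfl | ⟨ha1, -⟩, hrowa⟩
              · rfl
              · obtain ⟨κ, hκ⟩ := (hQmem a).mp ha1
                exact absurd (hrowa.symm.trans (hrow κ a hκ)) (hcase κ)
            · rintro rfl
              exact ⟨Or.inl rfl, rfl⟩
          rw [hset, Finset.card_singleton, hμ0]
        · have hq'μ : q' μ = q μ := hq'ne μ hμz
          have hqμz : q μ ≠ q z := fun hh => hμz (hqi hh)
          have hset : Q₂.filter (fun a => a.1 = q' μ) = Q.filter (fun a => a.1 = q μ) := by
            ext a
            rw [Finset.mem_filter, Finset.mem_filter, hmemQ₂, hq'μ]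
            constructor
            · rintro ⟨rfl | ⟨ha1, -⟩, hrowa⟩
              · exact absurd hrowa (hcase μ)
              · exact ⟨ha1, hrowa⟩
            · rintro ⟨ha1, hrowa⟩
              exact ⟨Or.inr ⟨ha1, hrowa ▸ hqμz⟩, hrowa⟩
          rw [hset, hfil μ]
          exact hQcard μ
      · intro a ha
        rcases (hmemQ₂ a).mp ha with rfl | ⟨ha1, ha2⟩
        · exact ⟨z, hq'z.symm⟩
        · obtain ⟨κ, hκ⟩ := (hQmem a).mp ha1
          have hκz : κ ≠ z := fun hh => ha2 (hh ▸ hrow κ a hκ)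
          exact ⟨κ, (hq'ne κ hκz).symm ▸ hrow κ a hκ⟩
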